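/- Let K be a field, let n ≥ 2 and m ≥ 1 be integers, and let p(x_1,…,x_m) ∈ K⟨x_1,…,x_m⟩ have zero constant term. Then there exist commutative polynomials p_{i_1 i_2 ⋯ i_k} in m(k+1) variables over K, for all 1 ≤ i_1,…,i_k ≤ m and 1 ≤ k ≤ n−1, such that for all u_i = (a^{(i)}_{jk}) ∈ T_n(K) and all 1 ≤ s < t ≤ n, the (s,t) entry of p(u_1,…,u_m) equals the sum over 1 ≤ k ≤ t−s, over all chains s = j_1 < j_2 < ⋯ < j_{k+1} = t, and over all 1 ≤ i_1,…,i_k ≤ m, of p_{i_1⋯i_k}(ā_{j_1 j_1},…,ā_{j_{k+1} j_{k+1}}) · a^{(i_1)}_{j_1 j_2} ⋯ a^{(i_k)}_{j_k j_{k+1}}, where ā_{jj} denotes the m-tuple (a^{(1)}_{jj},…,a^{(m)}_{jj}); moreover the (s,s) entry equals p(ā_{ss}). -/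

import Mathlib

open scoped Classical

namespace EntryFormula


variable {K : Type*} [Field K] {n m : ℕ}

lemma chain_climb {k : ℕ} {c : Fin (k + 1) → Fin n} (hc : StrictMono c) :
    ∀ l : Fin (k + 1), (c 0 : ℕ) + l ≤ c l := by
  intro l
  induction l using Fin.induction with
  | zero => simp
  | succ l ih =>
    have h1 : (c l.castSucc : ℕ) < c l.succ := hc (Fin.castSucc_lt_succ : l.castSucc < l.succ)
    have h2 : ((l.castSucc : Fin (k+1)) : ℕ) = (l : ℕ) := rfl
    have h3 : ((l.succ : Fin (k+1)) : ℕ) = (l : ℕ) + 1 := rfl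
    omega

lemma chain_isEmpty {k : ℕ} {s t : Fin n} (h : (t : ℕ) - (s : ℕ) < k) :
    IsEmpty {c : Fin (k + 1) → Fin n // StrictMono c ∧ c 0 = s ∧ c (Fin.last k) = t} := by
  constructor
  rintro ⟨c, hc, h0, hl⟩
  have h2 := chain_climb hc (Fin.last k)
  rw [h0, hl] at h2
  simp only [Fin.val_last] at h2
  have : (s : ℕ) ≤ t := by omega
  omega

lemma strictMono_snoc {k : ℕ} {c : Fin (k + 1) → Fin n} (hc : StrictMono c) {t : Fin n}
    (h : c (Fin.last k) < t) : StrictMono (Fin.snoc c t : Fin (k + 2) → Fin n) := by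
  rw [Fin.strictMono_iff_lt_succ]
  intro l
  induction l using Fin.lastCases with
  | last =>
    rw [Fin.succ_last, Fin.snoc_castSucc, Fin.snoc_last]
    exact h
  | cast l =>
    rw [Fin.succ_castSucc, Fin.snoc_castSucc, Fin.snoc_castSucc]
    exact hc (Fin.castSucc_lt_succ : l.castSucc < l.succ)

lemma diag_mul {A B : Matrix (Fin n) (Fin n) K} (hA : A.BlockTriangular id)
    (hB : B.BlockTriangular id) (s : Fin n) : (A * B) s s = A s s * B s s := by
  rw [Matrix.mul_apply]
  refine Finset.sum_eq_single s ?_ (by simp)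
  intro r _ hr
  rcases lt_or_gt_of_ne hr with h | h
  · rw [hA (show (id r : Fin n) < id s from h), zero_mul]
  · rw [hB (show (id s : Fin n) < id r from h), mul_zero]

lemma lift_triangular {u : Fin m → Matrix (Fin n) (Fin n) K}
    (hu : ∀ i, (u i).BlockTriangular id) (p : FreeAlgebra K (Fin m)) :
    (FreeAlgebra.lift K u p).BlockTriangular id ∧
      ∀ s, (FreeAlgebra.lift K u p) s s = FreeAlgebra.lift K (fun i => u i s s) p := by
  induction p using FreeAlgebra.induction with
  | grade0 r =>
    simp only [AlgHom.commutes]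
    constructor
    · intro i j hij
      rw [Matrix.algebraMap_matrix_apply, if_neg]
      rintro rfl; exact lt_irrefl _ hij
    · intro s
      simp [Matrix.algebraMap_matrix_apply]
  | grade1 x =>
    simp only [FreeAlgebra.lift_ι_apply]
    exact ⟨hu x, fun s => trivial⟩
  | mul a b ha hb =>
    simp only [map_mul]
    refine ⟨ha.1.mul hb.1, fun s => ?_⟩
    rw [diag_mul ha.1 hb.1, ha.2, hb.2]
  | add a b ha hb =>
    simp only [map_add]
    refine ⟨ha.1.add hb.1, fun s => ?_⟩
    rw [Matrix.add_apply, ha.2, hb.2]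

/-- Splitting a chain of length `k+3` from `s` to `t` into its second-to-last point `r` and
the initial chain of length `k+2` from `s` to `r`. -/
def chainSplit (s t : Fin n) (k : ℕ) :
    {c : Fin (k + 3) → Fin n // StrictMono c ∧ c 0 = s ∧ c (Fin.last (k + 2)) = t} ≃
    Σ r : {r : Fin n // s < r ∧ r < t},
      {c : Fin (k + 2) → Fin n // StrictMono c ∧ c 0 = s ∧ c (Fin.last (k + 1)) = r.1} where
  toFun c := ⟨⟨c.1 (Fin.castSucc (Fin.last (k + 1))),
      lt_of_eq_of_lt c.2.2.1.symm
        (c.2.1 (show (0 : Fin (k+3)) < Fin.castSucc (Fin.last (k + 1)) by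
          simp [Fin.lt_def])),
      lt_of_lt_of_eq (c.2.1 (Fin.castSucc_lt_last _)) c.2.2.2⟩,
    ⟨c.1 ∘ Fin.castSucc, c.2.1.comp Fin.strictMono_castSucc, c.2.2.1, rfl⟩⟩
  invFun rc := ⟨Fin.snoc rc.2.1 t,
    strictMono_snoc rc.2.2.1 (lt_of_eq_of_lt rc.2.2.2.2 rc.1.2.2),
    by rw [show (0 : Fin (k+3)) = Fin.castSucc 0 from rfl, Fin.snoc_castSucc]
       exact rc.2.2.2.1,
    by rw [Fin.snoc_last]⟩
  left_inv c := by
    refine Subtype.ext (funext fun l => ?_)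
    induction l using Fin.lastCases with
    | last => simp [c.2.2.2]
    | cast l => simp
  right_inv rc := by
    have h1 : (Fin.snoc (rc.2.1 : Fin (k+2) → Fin n) t : Fin (k+3) → Fin n)
        (Fin.castSucc (Fin.last (k + 1))) = rc.1.1 := by
      rw [Fin.snoc_castSucc, rc.2.2.2.2]
    refine Sigma.ext (Subtype.ext ?_) ((Subtype.heq_iff_coe_eq ?_).2 ?_)
    · simpa using h1
    · intro c
      simp only [h1]
    · funext l
      simp



/-- The claimed right-hand side of the entry formula. -/
noncomputable def RHSum (u : Fin m → Matrix (Fin n) (Fin n) K)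
    (P : (k : ℕ) → (Fin k → Fin m) → MvPolynomial (Fin m × Fin (k + 1)) K)
    (s t : Fin n) : K :=
  ∑ k ∈ Finset.Icc 1 ((t : ℕ) - (s : ℕ)),
    ∑ j : {c : Fin (k + 1) → Fin n // StrictMono c ∧ c 0 = s ∧ c (Fin.last k) = t},
      ∑ i : Fin k → Fin m,
        MvPolynomial.eval (fun q => u q.1 (j.1 q.2) (j.1 q.2)) (P k i) *
          ∏ l : Fin k, u (i l) (j.1 l.castSucc) (j.1 l.succ)

/-- `p` admits the entry formula (with a compatible `P 0`). -/
def Good (K : Type*) [Field K] (n m : ℕ) (p : FreeAlgebra K (Fin m)) : Prop :=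
  ∃ P : (k : ℕ) → (Fin k → Fin m) → MvPolynomial (Fin m × Fin (k + 1)) K,
    (∀ (i0 : Fin 0 → Fin m) (a : Fin m → K),
      MvPolynomial.eval (fun q : Fin m × Fin 1 => a q.1) (P 0 i0) = FreeAlgebra.lift K a p) ∧
    ∀ u : Fin m → Matrix (Fin n) (Fin n) K, (∀ i, (u i).BlockTriangular id) →
      ∀ s t : Fin n, s < t → (FreeAlgebra.lift K u p) s t = RHSum u P s t

lemma good_zero : Good K n m 0 := by
  refine ⟨fun _ _ => 0, ?_, ?_⟩
  · intro i0 a; simp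
  · intro u hu s t hst
    simp [RHSum]

lemma good_add {p p' : FreeAlgebra K (Fin m)} (hp : Good K n m p) (hp' : Good K n m p') :
    Good K n m (p + p') := by
  obtain ⟨P, h1, h2⟩ := hp
  obtain ⟨P', h1', h2'⟩ := hp'
  refine ⟨fun k i => P k i + P' k i, ?_, ?_⟩
  · intro i0 a
    simp [h1 i0 a, h1' i0 a]
  · intro u hu s t hst
    rw [map_add, Matrix.add_apply, h2 u hu s t hst, h2' u hu s t hst]
    simp only [RHSum, map_add, add_mul, Finset.sum_add_distrib]

lemma good_smul (c : K) {p : FreeAlgebra K (Fin m)} (hp : Good K n m p) :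
    Good K n m (c • p) := by
  obtain ⟨P, h1, h2⟩ := hp
  refine ⟨fun k i => c • P k i, ?_, ?_⟩
  · intro i0 a
    simp [MvPolynomial.smul_eval, h1 i0 a]
  · intro u hu s t hst
    rw [map_smul, Matrix.smul_apply, h2 u hu s t hst]
    simp only [RHSum, MvPolynomial.smul_eval, Finset.smul_sum, smul_eq_mul, mul_assoc,
      Finset.mul_sum]

def chain2Unique (s t : Fin n) (hst : s < t) :
    Unique {c : Fin 2 → Fin n // StrictMono c ∧ c 0 = s ∧ c (Fin.last 1) = t} where
  default := ⟨![s, t], by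
    refine ⟨?_, rfl, rfl⟩
    rw [Fin.strictMono_iff_lt_succ]
    intro i
    fin_cases i
    simpa using hst⟩
  uniq := by
    rintro ⟨c, hc, h0, hl⟩
    apply Subtype.ext
    funext l
    fin_cases l
    · exact h0
    · exact hl

lemma good_gen (q : Fin m) : Good K n m (FreeAlgebra.ι K q) := by
  refine ⟨fun k => match k with
    | 0 => fun _ => MvPolynomial.X (q, 0)
    | 1 => fun i => if i 0 = q then 1 else 0
    | (_+2) => fun _ => 0, ?_, ?_⟩
  · intro i0 a
    simp [FreeAlgebra.lift_ι_apply]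
  · intro u hu s t hst
    rw [FreeAlgebra.lift_ι_apply, RHSum]
    have hN : 1 ∈ Finset.Icc 1 ((t : ℕ) - (s : ℕ)) := by
      rw [Finset.mem_Icc]
      have : (s : ℕ) < t := hst
      omega
    rw [Finset.sum_eq_single_of_mem 1 hN ?_]
    · haveI := chain2Unique s t hst
      rw [Fintype.sum_unique]
      simp only [chain2Unique, Matrix.cons_val_zero, Fin.castSucc_zero, Fin.succ_zero_eq_one,
        Matrix.cons_val_one, Matrix.head_cons, apply_ite, map_one, map_zero,
        ite_mul, one_mul, zero_mul, Fin.prod_univ_one]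
      have hdef : (default : {c : Fin 2 → Fin n // StrictMono c ∧ c 0 = s ∧ c (Fin.last 1) = t})
          = ⟨![s, t], ((chain2Unique s t hst).default).2⟩ := Subsingleton.elim _ _
      rw [hdef]
      rw [Fintype.sum_equiv (Equiv.funUnique (Fin 1) (Fin m))
        (fun i : Fin 1 → Fin m => if i 0 = q then u (i 0) (![s,t] 0) (![s,t] 1) else 0)
        (fun x : Fin m => if x = q then u x (![s,t] 0) (![s,t] 1) else 0) (fun i => rfl)]
      simp
    · intro k hk hk1
      obtain ⟨k', rfl⟩ : ∃ k', k = k' + 2 := ⟨k - 2, by rw [Finset.mem_Icc] at hk; omega⟩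
      simp

/-- The inner sum over index tuples, for a fixed chain `c`. -/
noncomputable def Wsum (u : Fin m → Matrix (Fin n) (Fin n) K)
    (P : (k : ℕ) → (Fin k → Fin m) → MvPolynomial (Fin m × Fin (k + 1)) K)
    (k : ℕ) (c : Fin (k + 1) → Fin n) : K :=
  ∑ i : Fin k → Fin m,
    MvPolynomial.eval (fun v => u v.1 (c v.2) (c v.2)) (P k i) *
      ∏ l : Fin k, u (i l) (c l.castSucc) (c l.succ)

/-- Sum of `Wsum` over all chains from `s` to `r` with `k` jumps. -/
noncomputable def Vsum (u : Fin m → Matrix (Fin n) (Fin n) K)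
    (P : (k : ℕ) → (Fin k → Fin m) → MvPolynomial (Fin m × Fin (k + 1)) K)
    (s : Fin n) (k : ℕ) (r : Fin n) : K :=
  ∑ c : {c : Fin (k + 1) → Fin n // StrictMono c ∧ c 0 = s ∧ c (Fin.last k) = r},
    Wsum u P k c.1

lemma rhsum_eq (u : Fin m → Matrix (Fin n) (Fin n) K)
    (P : (k : ℕ) → (Fin k → Fin m) → MvPolynomial (Fin m × Fin (k + 1)) K) (s t : Fin n) :
    RHSum u P s t = ∑ k ∈ Finset.Icc 1 ((t : ℕ) - (s : ℕ)), Vsum u P s k t := rfl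

/-- The modified family of polynomials for `p * ι q` given the one for `p`. -/
noncomputable def stepP (P : (k : ℕ) → (Fin k → Fin m) → MvPolynomial (Fin m × Fin (k + 1)) K) (q : Fin m) :
    (k : ℕ) → (Fin k → Fin m) → MvPolynomial (Fin m × Fin (k + 1)) K
  | 0, i => P 0 i * MvPolynomial.X (q, 0)
  | (k + 1), i => P (k + 1) i * MvPolynomial.X (q, Fin.last (k + 1)) +
      if i (Fin.last k) = q then
        MvPolynomial.rename (Prod.map id Fin.castSucc) (P k (fun l => i l.castSucc)) else 0

/-- The "new last jump" contribution. -/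
noncomputable def Tsum (u : Fin m → Matrix (Fin n) (Fin n) K)
    (P : (k : ℕ) → (Fin k → Fin m) → MvPolynomial (Fin m × Fin (k + 1)) K)
    (q : Fin m) (s t : Fin n) : ℕ → K
  | 0 => 0
  | (k + 1) =>
      ∑ c : {c : Fin (k + 2) → Fin n // StrictMono c ∧ c 0 = s ∧ c (Fin.last (k + 1)) = t},
        Wsum u P k (fun l => c.1 l.castSucc) * u q (c.1 (Fin.castSucc (Fin.last k))) t

lemma chainTerm (u : Fin m → Matrix (Fin n) (Fin n) K)
    (P : (k : ℕ) → (Fin k → Fin m) → MvPolynomial (Fin m × Fin (k + 1)) K)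
    (q : Fin m) (t : Fin n) (k : ℕ) (c : Fin (k + 2) → Fin n)
    (hct : c (Fin.last (k + 1)) = t) :
    Wsum u (stepP P q) (k + 1) c =
      Wsum u P (k + 1) c * u q t t +
        Wsum u P k (fun l => c l.castSucc) * u q (c (Fin.castSucc (Fin.last k))) t := by
  have heval : ∀ i : Fin (k + 1) → Fin m,
      MvPolynomial.eval (fun v : Fin m × Fin (k + 2) => u v.1 (c v.2) (c v.2))
        (stepP P q (k + 1) i) =
      MvPolynomial.eval (fun v : Fin m × Fin (k + 2) => u v.1 (c v.2) (c v.2)) (P (k + 1) i) *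
          u q t t +
        (if i (Fin.last k) = q then
          MvPolynomial.eval (fun v : Fin m × Fin (k + 1) => u v.1 (c v.2.castSucc) (c v.2.castSucc))
            (P k (fun l => i l.castSucc)) else 0) := by
    intro i
    show MvPolynomial.eval _ (P (k + 1) i * MvPolynomial.X (q, Fin.last (k + 1)) + _) = _
    rw [map_add, map_mul, MvPolynomial.eval_X]
    congr 1
    · rw [hct]
    · split_ifs with h
      · rw [MvPolynomial.eval_rename]
        rfl
      · rw [map_zero]
  unfold Wsum
  simp only [heval, add_mul, Finset.sum_add_distrib]
  congr 1
  · rw [Finset.sum_mul]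
    exact Finset.sum_congr rfl fun i _ => by ring
  · -- reindex the i-sum by splitting off the last index
    rw [Fintype.sum_equiv (Fin.snocEquiv (fun _ : Fin (k + 1) => Fin m)).symm
      (fun i : Fin (k + 1) → Fin m =>
        (if i (Fin.last k) = q then
          MvPolynomial.eval (fun v : Fin m × Fin (k + 1) => u v.1 (c v.2.castSucc) (c v.2.castSucc))
            (P k (fun l => i l.castSucc)) else 0) *
          ∏ l : Fin (k + 1), u (i l) (c l.castSucc) (c l.succ))
      (fun x : Fin m × (Fin k → Fin m) =>
        (if x.1 = q then
          MvPolynomial.eval (fun v : Fin m × Fin (k + 1) => u v.1 (c v.2.castSucc) (c v.2.castSucc))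
            (P k x.2) else 0) *
          ((∏ l : Fin k, u (x.2 l) (c l.castSucc.castSucc) (c l.castSucc.succ)) *
            u x.1 (c (Fin.castSucc (Fin.last k))) t))
      ?_]
    · rw [Fintype.sum_prod_type]
      rw [Finset.sum_eq_single q ?_ (by simp)]
      · simp only [if_pos rfl, if_true]
        rw [Finset.sum_mul]
        refine Finset.sum_congr rfl fun i _ => ?_
        have hprod : (∏ x : Fin k, u (i x) (c x.castSucc.castSucc) (c x.succ.castSucc)) =
            ∏ x : Fin k, u (i x) (c x.castSucc.castSucc) (c x.castSucc.succ) :=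
          Finset.prod_congr rfl fun x _ => by rw [Fin.succ_castSucc]
        rw [hprod]
        ring
      · intro x _ hx
        simp [if_neg hx]
    · intro i
      simp only [Fin.snocEquiv_symm_apply, Fin.init]
      rw [Fin.prod_univ_castSucc]
      simp only [Fin.succ_last, hct]
      rfl

lemma termSplit (u : Fin m → Matrix (Fin n) (Fin n) K)
    (P : (k : ℕ) → (Fin k → Fin m) → MvPolynomial (Fin m × Fin (k + 1)) K)
    (q : Fin m) (s t : Fin n) (k : ℕ) :
    Vsum u (stepP P q) s (k + 1) t = Vsum u P s (k + 1) t * u q t t + Tsum u P q s t (k + 1) := by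
  unfold Vsum Tsum
  rw [Finset.sum_mul, ← Finset.sum_add_distrib]
  exact Finset.sum_congr rfl fun c _ => chainTerm u P q t k c.1 c.2.2.2

lemma Tone {p : FreeAlgebra K (Fin m)} (u : Fin m → Matrix (Fin n) (Fin n) K)
    (P : (k : ℕ) → (Fin k → Fin m) → MvPolynomial (Fin m × Fin (k + 1)) K)
    (hP0 : ∀ (i0 : Fin 0 → Fin m) (a : Fin m → K),
      MvPolynomial.eval (fun v : Fin m × Fin 1 => a v.1) (P 0 i0) = FreeAlgebra.lift K a p)
    (q : Fin m) {s t : Fin n} (hst : s < t) :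
    Tsum u P q s t 1 = (FreeAlgebra.lift K (fun i => u i s s) p) * u q s t := by
  show (∑ c : {c : Fin 2 → Fin n // StrictMono c ∧ c 0 = s ∧ c (Fin.last 1) = t},
      Wsum u P 0 (fun l => c.1 l.castSucc) * u q (c.1 (Fin.castSucc (Fin.last 0))) t) = _
  haveI := chain2Unique s t hst
  rw [Fintype.sum_unique]
  set c₀ := (default : {c : Fin 2 → Fin n // StrictMono c ∧ c 0 = s ∧ c (Fin.last 1) = t})
    with hc₀
  rw [show Fin.castSucc (Fin.last 0) = (0 : Fin 2) from rfl, c₀.2.2.1]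
  congr 1
  unfold Wsum
  rw [Fintype.sum_unique, Fin.prod_univ_zero, mul_one]
  have hfun : (fun v : Fin m × Fin 1 =>
      u v.1 ((fun l : Fin 1 => (c₀ : Fin 2 → Fin n) l.castSucc) v.2)
        ((fun l : Fin 1 => (c₀ : Fin 2 → Fin n) l.castSucc) v.2))
      = fun v : Fin m × Fin 1 => u v.1 s s := by
    funext v
    have h2 : v.2 = 0 := Subsingleton.elim _ _
    simp only [h2]
    rw [show Fin.castSucc (0 : Fin 1) = (0 : Fin 2) from rfl, c₀.2.2.1]
  rw [hfun]
  exact hP0 default (fun i => u i s s)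

lemma good_mul_gen {p : FreeAlgebra K (Fin m)} (hp : Good K n m p) (q : Fin m) :
    Good K n m (p * FreeAlgebra.ι K q) := by
  obtain ⟨P, hP0, hP⟩ := hp
  refine ⟨stepP P q, ?_, ?_⟩
  · intro i0 a
    show MvPolynomial.eval _ (P 0 i0 * MvPolynomial.X (q, 0)) = _
    rw [map_mul, MvPolynomial.eval_X, hP0 i0 a, map_mul, FreeAlgebra.lift_ι_apply]
  · intro u hu s t hst
    have hsv : (s : ℕ) < (t : ℕ) := hst
    have htri := (lift_triangular hu p).1
    have hdiag := (lift_triangular hu p).2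
    have hlhs : (FreeAlgebra.lift K u (p * FreeAlgebra.ι K q)) s t
        = (FreeAlgebra.lift K u p) s t * u q t t +
          ((FreeAlgebra.lift K u p) s s * u q s t +
            ∑ r ∈ Finset.Ioo s t, (FreeAlgebra.lift K u p) s r * u q r t) := by
      rw [map_mul, FreeAlgebra.lift_ι_apply, Matrix.mul_apply]
      rw [← Finset.sum_subset (Finset.subset_univ (Finset.Icc s t)) (fun r _ hr => ?_)]
      · rw [← Finset.Ico_insert_right (le_of_lt hst), Finset.sum_insert (by simp),
          ← Finset.Ioo_insert_left hst, Finset.sum_insert (by simp)]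
      · rw [Finset.mem_Icc] at hr
        push_neg at hr
        by_cases h1 : s ≤ r
        · rw [hu q (show (id t : Fin n) < id r from hr h1), mul_zero]
        · rw [htri (show (id r : Fin n) < id s from lt_of_not_ge h1), zero_mul]
    rw [hlhs, rhsum_eq]
    have hterm : ∀ k ∈ Finset.Icc 1 ((t : ℕ) - (s : ℕ)), Vsum u (stepP P q) s k t
        = Vsum u P s k t * u q t t + Tsum u P q s t k := by
      intro k hk
      obtain ⟨k', rfl⟩ : ∃ k', k = k' + 1 := ⟨k - 1, by rw [Finset.mem_Icc] at hk; omega⟩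
      exact termSplit u P q s t k'
    rw [Finset.sum_congr rfl hterm, Finset.sum_add_distrib, ← Finset.sum_mul,
      ← rhsum_eq, ← hP u hu s t hst]
    congr 1
    have hIcc : Finset.Icc 1 ((t : ℕ) - (s : ℕ))
        = insert 1 (Finset.Icc 2 ((t : ℕ) - (s : ℕ))) := by
      ext x
      simp only [Finset.mem_Icc, Finset.mem_insert]
      omega
    rw [hIcc, Finset.sum_insert (by simp), Tone u P hP0 q hst, hdiag s]
    congr 1
    have hstep2 : ∀ k ∈ Finset.Icc 2 ((t : ℕ) - (s : ℕ)),
        Tsum u P q s t k = ∑ r ∈ Finset.Ioo s t, Vsum u P s (k - 1) r * u q r t := by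
      intro k hk
      obtain ⟨k₀, rfl⟩ : ∃ k₀, k = k₀ + 2 := ⟨k - 2, by rw [Finset.mem_Icc] at hk; omega⟩
      show (∑ c : {c : Fin (k₀ + 3) → Fin n // StrictMono c ∧ c 0 = s ∧
          c (Fin.last (k₀ + 2)) = t},
        Wsum u P (k₀ + 1) (fun l => c.1 l.castSucc) *
          u q (c.1 (Fin.castSucc (Fin.last (k₀ + 1)))) t) = _
      rw [Fintype.sum_equiv (chainSplit s t k₀)
        (fun c : {c : Fin (k₀ + 3) → Fin n // StrictMono c ∧ c 0 = s ∧
            c (Fin.last (k₀ + 2)) = t} =>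
          Wsum u P (k₀ + 1) (fun l => c.1 l.castSucc) *
            u q (c.1 (Fin.castSucc (Fin.last (k₀ + 1)))) t)
        (fun x : Σ r : {r : Fin n // s < r ∧ r < t},
            {c : Fin (k₀ + 2) → Fin n // StrictMono c ∧ c 0 = s ∧
              c (Fin.last (k₀ + 1)) = r.1} =>
          Wsum u P (k₀ + 1) x.2.1 * u q x.1.1 t)
        (fun c => ?_)]
      · rw [← Finset.univ_sigma_univ, Finset.sum_sigma]
        trans (∑ r : {r : Fin n // s < r ∧ r < t}, Vsum u P s (k₀ + 1) r.1 * u q r.1 t)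
        · refine Finset.sum_congr rfl fun r _ => ?_
          show (∑ c' : {c : Fin (k₀ + 2) → Fin n // StrictMono c ∧ c 0 = s ∧
              c (Fin.last (k₀ + 1)) = r.1}, Wsum u P (k₀ + 1) c'.1 * u q r.1 t) =
            Vsum u P s (k₀ + 1) r.1 * u q r.1 t
          rw [Vsum, Finset.sum_mul]
        · rw [← Finset.sum_subtype (Finset.Ioo s t)
            (fun r => by simp [Finset.mem_Ioo])
            (fun r => Vsum u P s (k₀ + 1) r * u q r t)]
          norm_num
      · -- pointwise equality for the equiv
        rfl
    rw [Finset.sum_congr rfl hstep2, Finset.sum_comm]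
    refine Finset.sum_congr rfl fun r hr => ?_
    rw [Finset.mem_Ioo] at hr
    have hsr : (s : ℕ) < (r : ℕ) := hr.1
    have hrt : (r : ℕ) < (t : ℕ) := hr.2
    rw [← Finset.sum_mul]
    congr 1
    rw [hP u hu s r hr.1, rhsum_eq]
    have e1 : (∑ k ∈ Finset.Icc 2 ((t : ℕ) - (s : ℕ)), Vsum u P s (k - 1) r)
        = ∑ k ∈ Finset.Icc 1 ((t : ℕ) - (s : ℕ) - 1), Vsum u P s k r := by
      refine Finset.sum_nbij' (fun k => k - 1) (fun k => k + 1) ?_ ?_ ?_ ?_ ?_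
      · intro a ha
        simp only [Finset.mem_Icc] at ha ⊢
        omega
      · intro a ha
        simp only [Finset.mem_Icc] at ha ⊢
        omega
      · intro a ha
        simp only [Finset.mem_Icc] at ha
        show a - 1 + 1 = a
        omega
      · intro a ha
        show a + 1 - 1 = a
        omega
      · intro a ha
        rfl
    have e2 : (∑ k ∈ Finset.Icc 1 ((r : ℕ) - (s : ℕ)), Vsum u P s k r)
        = ∑ k ∈ Finset.Icc 1 ((t : ℕ) - (s : ℕ) - 1), Vsum u P s k r := by
      refine Finset.sum_subset ?_ ?_
      · intro x hx
        rw [Finset.mem_Icc] at hx ⊢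
        omega
      · intro x hx hnx
        rw [Finset.mem_Icc] at hx hnx
        haveI := chain_isEmpty (n := n) (k := x) (s := s) (t := r) (by omega)
        rw [Vsum, Finset.univ_eq_empty, Finset.sum_empty]
    rw [e2]
    exact e1.symm

lemma good_of_const_zero {p : FreeAlgebra K (Fin m)}
    (hconst : FreeAlgebra.lift K (fun _ : Fin m => (0 : K)) p = 0) : Good K n m p := by
  have key : ∀ p : FreeAlgebra K (Fin m),
      Good K n m (p - (FreeAlgebra.lift K (fun _ : Fin m => (0 : K)) p) • 1) := by
    intro p
    have hmem : p ∈ Submodule.span K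
        ((Submonoid.closure (Set.range (FreeAlgebra.ι K)) : Submonoid (FreeAlgebra K (Fin m)))
          : Set (FreeAlgebra K (Fin m))) := by
      rw [← Algebra.adjoin_eq_span, FreeAlgebra.adjoin_range_ι]
      simp
    induction hmem using Submodule.span_induction with
    | mem x hx =>
      have hx' : x = 1 ∨ (Good K n m x ∧
          FreeAlgebra.lift K (fun _ : Fin m => (0 : K)) x = 0) := by
        induction hx using Submonoid.closure_induction_right with
        | one => exact Or.inl rfl
        | mul_right y hy z hz ih =>
          obtain ⟨q, rfl⟩ := hz
          rcases ih with rfl | ⟨hg, h0⟩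
          · refine Or.inr ⟨by simpa using good_gen (K := K) (n := n) q, ?_⟩
            simp
          · refine Or.inr ⟨good_mul_gen hg q, ?_⟩
            rw [map_mul, h0, zero_mul]
      rcases hx' with rfl | ⟨hg, h0⟩
      · simpa using good_zero (K := K) (n := n) (m := m)
      · rw [h0, zero_smul, sub_zero]
        exact hg
    | zero => simpa using good_zero (K := K) (n := n) (m := m)
    | add x y hx hy ihx ihy =>
      rw [map_add, add_smul, ← sub_add_sub_comm]
      exact good_add ihx ihy
    | smul c x hx ih =>
      rw [map_smul, smul_eq_mul, mul_smul, ← smul_sub]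
      exact good_smul c ih
  have := key p
  rwa [hconst, zero_smul, sub_zero] at this

end EntryFormula

/-- **Lemma 3.2.** Let `p ∈ K⟨x_1,…,x_m⟩` have zero constant term. Then there exist
commutative polynomials `p_{i_1⋯i_k}` in `m(k+1)` variables (variables indexed by
`Fin m × Fin (k+1)`), for all tuples `(i_1,…,i_k) ∈ {1,…,m}^k`, such that for all
upper triangular `u_1,…,u_m ∈ T_n(K)` and all `s < t`, the `(s,t)` entry of
`p(u_1,…,u_m)` equals
`∑_{k=1}^{t-s} ∑_{s = j_1 < ⋯ < j_{k+1} = t} ∑_{i_1,…,i_k}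
  p_{i_1⋯i_k}(ā_{j_1 j_1},…,ā_{j_{k+1} j_{k+1}}) · a^{(i_1)}_{j_1 j_2} ⋯ a^{(i_k)}_{j_k j_{k+1}}`,
where `ā_{jj} = (a^{(1)}_{jj},…,a^{(m)}_{jj})`; moreover the `(s,s)` entry equals
`p(ā_{ss})`. -/
theorem entry_formula_of_polynomial_eval
    (K : Type*) [Field K] (n m : ℕ) (hn : 2 ≤ n) (hm : 1 ≤ m)
    (p : FreeAlgebra K (Fin m))
    (hconst : FreeAlgebra.lift K (fun _ : Fin m => (0 : K)) p = 0) :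
    ∃ P : (k : ℕ) → (Fin k → Fin m) → MvPolynomial (Fin m × Fin (k + 1)) K,
      ∀ u : Fin m → Matrix (Fin n) (Fin n) K, (∀ i, (u i).BlockTriangular id) →
        (∀ s t : Fin n, s < t →
          (FreeAlgebra.lift K u p) s t =
            ∑ k ∈ Finset.Icc 1 ((t : ℕ) - (s : ℕ)),
              ∑ j : {c : Fin (k + 1) → Fin n //
                  StrictMono c ∧ c 0 = s ∧ c (Fin.last k) = t},
                ∑ i : Fin k → Fin m,
                  MvPolynomial.eval (fun q => u q.1 (j.1 q.2) (j.1 q.2)) (P k i) *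
                    ∏ l : Fin k, u (i l) (j.1 l.castSucc) (j.1 l.succ)) ∧
        (∀ s : Fin n,
          (FreeAlgebra.lift K u p) s s = FreeAlgebra.lift K (fun i => u i s s) p) := by
  obtain ⟨P, hP0, hP⟩ := EntryFormula.good_of_const_zero (n := n) hconst
  exact ⟨P, fun u hu =>
    ⟨fun s t hst => hP u hu s t hst, fun s => (EntryFormula.lift_triangular hu p).2 s⟩⟩
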